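/- Let μ > 0 and define z : ℝ → ℂ² by z(x) = ( √(μ²/(μ²+1))·e^{−ix/μ}, √(1/(μ²+1))·e^{iμx} ). Then z″(x) = −z(x) for all x ∈ ℝ if and only if μ = 1. (Since z is a unit-speed curve in the unit sphere, this is exactly the condition that z is a great-circle geodesic.) -/

import Mathlib

noncomputable def E2 : (Fin 2 → ℂ) →L[ℝ] EuclideanSpace ℂ (Fin 2) :=
  ((((EuclideanSpace.equiv (Fin 2) ℂ).symm).toContinuousLinearMap).restrictScalars ℝ)

lemma E2_apply (v : Fin 2 → ℂ) : E2 v = (WithLp.equiv 2 (Fin 2 → ℂ)).symm v := rfl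

lemma E2_inj {v w : Fin 2 → ℂ} (h : E2 v = E2 w) : v = w :=
  (WithLp.equiv 2 (Fin 2 → ℂ)).symm.injective h

lemma hd_exp (c : ℂ) (x : ℝ) :
    HasDerivAt (fun x:ℝ => Complex.exp (c * x)) (c * Complex.exp (c * x)) x := by
  have h1 : HasDerivAt (fun x:ℝ => c * (x:ℂ)) c x := by
    simpa using (Complex.ofRealCLM.hasDerivAt (x := x)).const_mul c
  simpa [mul_comm] using h1.cexp

lemma hd_main (u v c d : ℂ) (x : ℝ) :
    HasDerivAt (fun x:ℝ => E2 ![u * Complex.exp (c * x), v * Complex.exp (d * x)])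
      (E2 ![u * c * Complex.exp (c * x), v * d * Complex.exp (d * x)]) x := by
  have hw : HasDerivAt
      (fun x:ℝ => (![u * Complex.exp (c * x), v * Complex.exp (d * x)] : Fin 2 → ℂ))
      ![u * c * Complex.exp (c * x), v * d * Complex.exp (d * x)] x := by
    rw [hasDerivAt_pi]
    intro i
    fin_cases i
    · simpa [mul_assoc, mul_comm, mul_left_comm] using ((hd_exp c x).const_mul u)
    · simpa [mul_assoc, mul_comm, mul_left_comm] using ((hd_exp d x).const_mul v)
  exact (E2.hasFDerivAt).comp_hasDerivAt x hw

/-- z″ = −z holds identically if and only if μ = 1, i.e. z is a geodesic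
of the unit sphere exactly when μ² = 1. -/
theorem stmt_8 (μ : ℝ) (hμ : 0 < μ)
    (z : ℝ → EuclideanSpace ℂ (Fin 2))
    (hz : ∀ x : ℝ, z x = (WithLp.equiv 2 (Fin 2 → ℂ)).symm
      ![((Real.sqrt (μ^2/(μ^2 + 1)) : ℝ) : ℂ) * Complex.exp (-Complex.I * ((x/μ : ℝ) : ℂ)),
        ((Real.sqrt (1/(μ^2 + 1)) : ℝ) : ℂ) * Complex.exp (Complex.I * ((μ*x : ℝ) : ℂ))]) :
    (∀ x : ℝ, deriv (deriv z) x = -(z x)) ↔ μ = 1 := by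
  have hμ0 : (μ : ℂ) ≠ 0 := by exact_mod_cast hμ.ne'
  set a : ℂ := ((Real.sqrt (μ^2/(μ^2 + 1)) : ℝ) : ℂ) with ha
  set b : ℂ := ((Real.sqrt (1/(μ^2 + 1)) : ℝ) : ℂ) with hb
  set c₁ : ℂ := -Complex.I / μ with hc₁
  set c₂ : ℂ := Complex.I * μ with hc₂
  have hz' : z = fun x : ℝ =>
      E2 ![a * Complex.exp (c₁ * x), b * Complex.exp (c₂ * x)] := by
    funext x
    have e1 : -Complex.I * ((x/μ : ℝ) : ℂ) = c₁ * x := by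
      rw [hc₁]; push_cast; field_simp
    have e2 : Complex.I * ((μ*x : ℝ) : ℂ) = c₂ * x := by
      rw [hc₂]; push_cast; ring
    rw [hz x, e1, e2, ← E2_apply]
  have hd1 : deriv z = fun x : ℝ =>
      E2 ![a * c₁ * Complex.exp (c₁ * x), b * c₂ * Complex.exp (c₂ * x)] := by
    funext x
    rw [hz']
    exact (hd_main a b c₁ c₂ x).deriv
  have hd2 : ∀ x : ℝ, deriv (deriv z) x =
      E2 ![a * c₁ * c₁ * Complex.exp (c₁ * x), b * c₂ * c₂ * Complex.exp (c₂ * x)] := by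
    intro x
    rw [hd1]
    exact (hd_main (a * c₁) (b * c₂) c₁ c₂ x).deriv
  have hb0 : b ≠ 0 := by
    rw [hb]
    have : (0:ℝ) < Real.sqrt (1/(μ^2 + 1)) :=
      Real.sqrt_pos.mpr (by positivity)
    exact_mod_cast this.ne'
  constructor
  · intro h
    have h0 := h 0
    rw [hd2 0, hz'] at h0
    simp only [Complex.ofReal_zero, mul_zero, Complex.exp_zero, mul_one] at h0
    rw [← map_neg] at h0
    have h1 := congrFun (E2_inj h0) 1
    simp only [Matrix.cons_val_one, Matrix.head_cons, Pi.neg_apply, Matrix.cons_val_zero] at h1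
    have hc2sq : c₂ * c₂ = -(μ^2 : ℂ) := by
      rw [hc₂]; linear_combination ((μ:ℂ)^2) * Complex.I_sq
    rw [mul_assoc, hc2sq] at h1
    have h2 : (μ:ℂ)^2 * b = 1 * b := by linear_combination -h1
    have hμ2 : (μ:ℂ)^2 = 1 := mul_right_cancel₀ hb0 h2
    have : μ^2 = 1 := by exact_mod_cast hμ2
    nlinarith
  · intro h
    subst h
    intro x
    rw [hd2 x, hz', ← map_neg]
    congr 1
    have h1 : c₁ * c₁ = -1 := by
      rw [hc₁]; push_cast; linear_combination Complex.I_sq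
    have h2 : c₂ * c₂ = -1 := by
      rw [hc₂]; push_cast; linear_combination Complex.I_sq
    funext i
    fin_cases i <;> simp [mul_assoc, h1, h2]
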